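/- Let m be an even integer with m ≥ 14 and let v = (v_1, …, v_t) be an (m,t)-vector with t ≥ 3. Then the girth of the Tanner graph TG(H_m(v)) equals 12 if and only if for all indices k_1, k_2, k_3, k_4 ∈ {1, …, t} with {k_1, k_2} ∩ {k_3, k_4} = ∅ one has (v_{k_1} + v_{k_2}) − (v_{k_3} + v_{k_4}) ∉ {0, m, −m}. -/

import Mathlib

/-- The Tanner graph TG(H_m(v)): check nodes are `ZMod m`, variable nodes are the pairs
`(i, j) : Fin t × Fin (m / 2)`, and variable node `(i, j)` is adjacent exactly to the
check nodes `2j mod m` and `(v i + 2j) mod m`. -/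
def tannerGraph (m t : ℕ) (v : Fin t → ℕ) :
    SimpleGraph ((ZMod m) ⊕ (Fin t × Fin (m / 2))) :=
  SimpleGraph.fromRel (fun x y =>
    match x, y with
    | Sum.inl a, Sum.inr p =>
        a = ((2 * (p.2 : ℕ) : ℕ) : ZMod m) ∨ a = ((v p.1 + 2 * (p.2 : ℕ) : ℕ) : ZMod m)
    | _, _ => False)

namespace TannerAux

open SimpleGraph Sum Walk

variable {m t : ℕ} {v : Fin t → ℕ}

lemma adj_inl_inr {a : ZMod m} {p : Fin t × Fin (m/2)} :
    (tannerGraph m t v).Adj (inl a) (inr p) ↔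
      a = ((2 * (p.2 : ℕ) : ℕ) : ZMod m) ∨ a = ((v p.1 + 2 * (p.2 : ℕ) : ℕ) : ZMod m) := by
  simp [tannerGraph, SimpleGraph.fromRel_adj]

lemma adj_inr_inl {a : ZMod m} {p : Fin t × Fin (m/2)} :
    (tannerGraph m t v).Adj (inr p) (inl a) ↔
      a = ((2 * (p.2 : ℕ) : ℕ) : ZMod m) ∨ a = ((v p.1 + 2 * (p.2 : ℕ) : ℕ) : ZMod m) := by
  rw [SimpleGraph.adj_comm]; exact adj_inl_inr

lemma not_adj_inl_inl {a b : ZMod m} : ¬ (tannerGraph m t v).Adj (inl a) (inl b) := by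
  simp [tannerGraph, SimpleGraph.fromRel_adj]

lemma not_adj_inr_inr {p q : Fin t × Fin (m/2)} : ¬ (tannerGraph m t v).Adj (inr p) (inr q) := by
  simp [tannerGraph, SimpleGraph.fromRel_adj]

section Arith

lemma cast_inj_of_lt {x y : ℕ} (hx : x < m) (hy : y < m) (h : (x : ZMod m) = y) : x = y := by
  have := (ZMod.natCast_eq_natCast_iff' x y m).mp h
  rwa [Nat.mod_eq_of_lt hx, Nat.mod_eq_of_lt hy] at this

lemma parity_ne (h2 : (2:ℕ) ∣ m) {x y : ℕ} (hx : x % 2 = 0) (hy : y % 2 = 1) : (x : ZMod m) ≠ (y : ZMod m) := by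
  intro h
  have h' := congrArg (ZMod.castHom h2 (ZMod 2)) h
  rw [map_natCast, map_natCast, ZMod.natCast_eq_natCast_iff'] at h'
  omega

lemma nbr {p : Fin t × Fin (m/2)} {a b : ZMod m}
    (ha : (tannerGraph m t v).Adj (inl a) (inr p))
    (hb : (tannerGraph m t v).Adj (inl b) (inr p)) (hab : a ≠ b) :
    (a = ((2 * (p.2:ℕ) :ℕ) : ZMod m) ∧ b = ((v p.1 + 2 * (p.2:ℕ) :ℕ) : ZMod m)) ∨
    (b = ((2 * (p.2:ℕ) :ℕ) : ZMod m) ∧ a = ((v p.1 + 2 * (p.2:ℕ) :ℕ) : ZMod m)) := by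
  rw [adj_inl_inr] at ha hb
  rcases ha with h|h <;> rcases hb with h'|h' <;>
    first
    | (exfalso; exact hab (h.trans h'.symm))
    | tauto

lemma core (hmono : StrictMono v) (hlt : ∀ i, v i < m) {p q : Fin t × Fin (m/2)}
    (he : ((2 * (p.2:ℕ) :ℕ) : ZMod m) = ((2 * (q.2:ℕ) :ℕ) : ZMod m))
    (ho : ((v p.1 + 2 * (p.2:ℕ) :ℕ) : ZMod m) = ((v q.1 + 2 * (q.2:ℕ) :ℕ) : ZMod m)) :
    p = q := by
  have hp2 : 2 * (p.2:ℕ) < m := by have := p.2.isLt; omega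
  have hq2 : 2 * (q.2:ℕ) < m := by have := q.2.isLt; omega
  have hj : (p.2:ℕ) = (q.2:ℕ) := by
    have := cast_inj_of_lt hp2 hq2 he
    omega
  have hv : (v p.1 : ZMod m) = (v q.1 : ZMod m) := by
    push_cast at ho he
    linear_combination ho - he
  have hv' : v p.1 = v q.1 := cast_inj_of_lt (hlt _) (hlt _) hv
  have : p.1 = q.1 := hmono.injective hv'
  exact Prod.ext this (Fin.ext hj)

end Arith
section Parity

lemma pi_natCast (h2 : (2:ℕ) ∣ m) (x : ℕ) :
    ZMod.castHom h2 (ZMod 2) ((x : ℕ) : ZMod m) = ((x % 2 : ℕ) : ZMod 2) := by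
  rw [map_natCast]; exact (ZMod.natCast_mod x 2).symm

lemma trail_parity (h2 : (2:ℕ) ∣ m) (hodd : ∀ i, Odd (v i)) :
    ∀ (n : ℕ) (a b : ZMod m) (w : (tannerGraph m t v).Walk (inl a) (inl b)),
      w.length = n → w.IsTrail →
      ∃ L : ℕ, n = 2 * L ∧
        ZMod.castHom h2 (ZMod 2) b = ZMod.castHom h2 (ZMod 2) a + (L : ZMod 2) := by
  intro n
  induction n using Nat.strong_induction_on with
  | _ n IH =>
    intro a b w hlen htr
    cases w with
    | nil =>
      exact ⟨0, by simpa using hlen.symm, by simp⟩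
    | cons h1 w1 =>
      rename_i x1
      match x1, h1, w1 with
      | inl c, h1, w1 => exact absurd h1 not_adj_inl_inl
      | inr p, h1, w1 =>
        cases w1 with
        | cons h2' w2 =>
          rename_i x2
          match x2, h2', w2 with
          | inr q, h2', w2 => exact absurd h2' not_adj_inr_inr
          | inl a', h2', w2 =>
            have hne : a ≠ a' := by
              intro hA
              subst hA
              have hE := htr.edges_nodup
              simp only [Walk.edges_cons, List.nodup_cons, List.mem_cons] at hE
              exact hE.1 (Or.inl (by rw [Sym2.eq_swap]))
            have htr2 : w2.IsTrail := htr.of_cons.of_cons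
            have hlen2 : w2.length = n - 2 ∧ 2 ≤ n := by
              simp only [Walk.length_cons] at hlen; omega
            obtain ⟨L', hL1, hL2⟩ := IH (n-2) (by omega) a' b w2 hlen2.1 htr2
            have hstep : ZMod.castHom h2 (ZMod 2) a' = ZMod.castHom h2 (ZMod 2) a + 1 := by
              rw [adj_inl_inr] at h1
              have h2'' : (tannerGraph m t v).Adj (inl a') (inr p) := h2'.symm
              rw [adj_inl_inr] at h2''
              have hv2 : v p.1 % 2 = 1 := Nat.odd_iff.mp (hodd p.1)
              have e1 : (v p.1 + 2*(p.2:ℕ)) % 2 = 1 := by omega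
              have e0 : (2*(p.2:ℕ)) % 2 = 0 := by omega
              rcases h1 with h1|h1 <;> rcases h2'' with hb|hb <;>
                [skip; subst h1 hb; subst h1 hb; skip] <;>
                first
                | exact absurd (h1.trans hb.symm) hne
                | (rw [pi_natCast, pi_natCast, e1, e0]; decide)
            refine ⟨L' + 1, by omega, ?_⟩
            rw [hL2, hstep]
            push_cast
            ring

end Parity
section NoShort

lemma P_even (h2 : (2:ℕ) ∣ m) (j : ℕ) :
    ZMod.castHom h2 (ZMod 2) ((2 * j : ℕ) : ZMod m) = 0 := by
  rw [pi_natCast]; norm_num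

lemma P_odd (h2 : (2:ℕ) ∣ m) {x : ℕ} (hx : x % 2 = 1) (j : ℕ) :
    ZMod.castHom h2 (ZMod 2) ((x + 2 * j : ℕ) : ZMod m) = 1 := by
  rw [pi_natCast]
  have : (x + 2 * j) % 2 = 1 := by omega
  rw [this]; norm_num

lemma j_inj (h2 : (2:ℕ) ∣ m) {j j' : Fin (m/2)}
    (h : ((2 * (j:ℕ) : ℕ) : ZMod m) = ((2 * (j':ℕ) : ℕ) : ZMod m)) : j = j' := by
  have h1 : 2 * (j:ℕ) < m := by have := j.isLt; omega
  have h1' : 2 * (j':ℕ) < m := by have := j'.isLt; omega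
  have := cast_inj_of_lt h1 h1' h
  exact Fin.ext (by omega)

lemma odd_share (h2 : (2:ℕ) ∣ m) {x : ℕ} {j j' : Fin (m/2)}
    (h : ((x + 2 * (j:ℕ) : ℕ) : ZMod m) = ((x + 2 * (j':ℕ) : ℕ) : ZMod m)) : j = j' := by
  apply j_inj h2
  push_cast at h ⊢
  linear_combination h

lemma no_four (h2 : (2:ℕ) ∣ m) (hodd : ∀ i, Odd (v i)) (hmono : StrictMono v)
    (hlt : ∀ i, v i < m) {a : ZMod m}
    (w : (tannerGraph m t v).Walk (inl a) (inl a)) (hc : w.IsCycle) (hlen : w.length = 4) :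
    False := by
  cases w with
  | nil => simp at hlen
  | cons h1 w1 =>
  rename_i x1
  cases w1 with
  | nil => simp at hlen
  | cons hh2 w2 =>
  rename_i x2
  cases w2 with
  | nil => simp at hlen
  | cons h3 w3 =>
  rename_i x3
  cases w3 with
  | nil => simp at hlen
  | cons h4 w4 =>
  rename_i x4
  cases w4 with
  | cons h5 w5 => simp [Walk.length_cons] at hlen
  | nil =>
  match x1, h1, x2, hh2, x3, h3, h4 with
  | inl _, h1, _, hh2, _, h3, h4 => exact not_adj_inl_inl h1
  | inr p, h1, inr _, hh2, _, h3, h4 => exact not_adj_inr_inr hh2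
  | inr p, h1, inl b, hh2, inl _, h3, h4 => exact not_adj_inl_inl h3
  | inr p, h1, inl b, hh2, inr q, h3, h4 =>
  have hnd := hc.support_nodup
  simp only [Walk.support_cons, Walk.support_nil, List.tail_cons] at hnd
  have hab : a ≠ b := by rintro rfl; simp at hnd
  have hpq : p ≠ q := by rintro rfl; simp at hnd
  have hv1 : v p.1 % 2 = 1 := Nat.odd_iff.mp (hodd p.1)
  have hv2 : v q.1 % 2 = 1 := Nat.odd_iff.mp (hodd q.1)
  rcases nbr h1 hh2.symm hab with ⟨e1,e2⟩|⟨e1,e2⟩ <;>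
    rcases nbr h4.symm h3 hab with ⟨f1,f2⟩|⟨f1,f2⟩
  · exact hpq (core hmono hlt (e1.symm.trans f1) (e2.symm.trans f2))
  · exact parity_ne h2 (by omega) (by omega) (e1.symm.trans f2)
  · exact parity_ne h2 (by omega) (by omega) (f1.symm.trans e2)
  · exact hpq (core hmono hlt (e1.symm.trans f1) (e2.symm.trans f2))

end NoShort

section NoEight

lemma no_eight (h2 : (2:ℕ) ∣ m) (hm14 : 14 ≤ m) (hodd : ∀ i, Odd (v i))
    (hpos : ∀ i, 0 < v i) (hmono : StrictMono v) (hlt : ∀ i, v i < m)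
    (hcond : ∀ k1 k2 k3 k4 : Fin t, k1 ≠ k3 → k1 ≠ k4 → k2 ≠ k3 → k2 ≠ k4 →
      ((v k1 : ℤ) + (v k2 : ℤ)) - ((v k3 : ℤ) + (v k4 : ℤ)) ∉
        ({0, (m : ℤ), -(m : ℤ)} : Set ℤ))
    {a : ZMod m}
    (w : (tannerGraph m t v).Walk (inl a) (inl a)) (hc : w.IsCycle) (hlen : w.length = 8) :
    False := by
  cases w with
  | nil => simp at hlen
  | cons h1 w1 =>
  rename_i x1
  match x1, h1, w1 with
  | inl _, h1, _ => exact not_adj_inl_inl h1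
  | inr p1, h1, w1 =>
  cases w1 with
  | cons hh2 w2 =>
  rename_i x2
  match x2, hh2, w2 with
  | inr _, hh2, _ => exact not_adj_inr_inr hh2
  | inl a2, hh2, w2 =>
  cases w2 with
  | nil => simp at hlen
  | cons h3 w3 =>
  rename_i x3
  match x3, h3, w3 with
  | inl _, h3, _ => exact not_adj_inl_inl h3
  | inr p2, h3, w3 =>
  cases w3 with
  | cons h4 w4 =>
  rename_i x4
  match x4, h4, w4 with
  | inr _, h4, _ => exact not_adj_inr_inr h4
  | inl a3, h4, w4 =>
  cases w4 with
  | nil => simp at hlen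
  | cons h5 w5 =>
  rename_i x5
  match x5, h5, w5 with
  | inl _, h5, _ => exact not_adj_inl_inl h5
  | inr p3, h5, w5 =>
  cases w5 with
  | cons h6 w6 =>
  rename_i x6
  match x6, h6, w6 with
  | inr _, h6, _ => exact not_adj_inr_inr h6
  | inl a4, h6, w6 =>
  cases w6 with
  | nil => simp at hlen
  | cons h7 w7 =>
  rename_i x7
  match x7, h7, w7 with
  | inl _, h7, _ => exact not_adj_inl_inl h7
  | inr p4, h7, w7 =>
  cases w7 with
  | cons h8 w8 =>
  cases w8 with
  | cons h9 w9 => simp [Walk.length_cons] at hlen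
  | nil =>
  -- now : h1 : Adj (inl a) (inr p1), hh2 : Adj (inr p1) (inl a2), h3 : Adj (inl a2) (inr p2),
  -- h4 : Adj (inr p2) (inl a3), h5 : Adj (inl a3) (inr p3), h6 : Adj (inr p3) (inl a4),
  -- h7 : Adj (inl a4) (inr p4), h8 : Adj (inr p4) (inl a)
  have hnd := hc.support_nodup
  simp only [Walk.support_cons, Walk.support_nil, List.tail_cons] at hnd
  have haa2 : a ≠ a2 := by rintro rfl; simp at hnd
  have ha2a3 : a2 ≠ a3 := by rintro rfl; simp at hnd
  have ha3a4 : a3 ≠ a4 := by rintro rfl; simp at hnd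
  have ha4a : a4 ≠ a := by rintro rfl; simp at hnd
  have hp12 : p1 ≠ p2 := by rintro rfl; simp at hnd
  have hp23 : p2 ≠ p3 := by rintro rfl; simp at hnd
  have hp34 : p3 ≠ p4 := by rintro rfl; simp at hnd
  have hp41 : p4 ≠ p1 := by rintro rfl; simp at hnd
  have hv1 : v p1.1 % 2 = 1 := Nat.odd_iff.mp (hodd p1.1)
  have hv2 : v p2.1 % 2 = 1 := Nat.odd_iff.mp (hodd p2.1)
  have hv3 : v p3.1 % 2 = 1 := Nat.odd_iff.mp (hodd p3.1)
  have hv4 : v p4.1 % 2 = 1 := Nat.odd_iff.mp (hodd p4.1)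
  -- final contradiction, given the four ZMod m equations and index distinctness
  have key : ¬ ( ((v p1.1 : ZMod m) + (v p3.1 : ZMod m) = (v p2.1 : ZMod m) + (v p4.1 : ZMod m))
      ∧ p1.1 ≠ p2.1 ∧ p2.1 ≠ p3.1 ∧ p3.1 ≠ p4.1 ∧ p4.1 ≠ p1.1 ) := by
    rintro ⟨hzm, hi12, hi23, hi34, hi41⟩
    have hS0 : (((v p1.1 :ℤ) + (v p3.1 :ℤ) - ((v p2.1 :ℤ) + (v p4.1 :ℤ)) : ℤ) : ZMod m) = 0 := by
      push_cast
      push_cast at hzm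
      linear_combination hzm
    obtain ⟨c, hcS⟩ := (ZMod.intCast_zmod_eq_zero_iff_dvd _ _).mp hS0
    have hm0 : (0:ℤ) < (m:ℤ) := by exact_mod_cast Nat.lt_of_lt_of_le (by norm_num) hm14
    have b1 : (v p1.1:ℤ) < m := by exact_mod_cast hlt _
    have b2 : (v p2.1:ℤ) < m := by exact_mod_cast hlt _
    have b3 : (v p3.1:ℤ) < m := by exact_mod_cast hlt _
    have b4 : (v p4.1:ℤ) < m := by exact_mod_cast hlt _
    have c1 : (0:ℤ) < v p1.1 := by exact_mod_cast hpos _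
    have c2 : (0:ℤ) < v p2.1 := by exact_mod_cast hpos _
    have c3 : (0:ℤ) < v p3.1 := by exact_mod_cast hpos _
    have c4 : (0:ℤ) < v p4.1 := by exact_mod_cast hpos _
    have hcu : c ≤ 1 := by nlinarith
    have hcl : -1 ≤ c := by nlinarith
    refine hcond p1.1 p3.1 p2.1 p4.1 hi12 (fun h => hi41 h.symm) (fun h => hi23 h.symm) hi34 ?_
    simp only [Set.mem_insert_iff, Set.mem_singleton_iff]
    interval_cases c <;> omega
  have hdet : ∀ x : ZMod 2, x = 0 ∨ x = 1 := by decide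
  rcases hdet (ZMod.castHom h2 (ZMod 2) a) with hPa | hPa
  · -- a is "even"
    rcases nbr h1 hh2.symm haa2 with ⟨e1,e2⟩|⟨e1,e2⟩
    swap
    · rw [e2, P_odd h2 hv1] at hPa; exact one_ne_zero hPa
    have hPa2 : ZMod.castHom h2 (ZMod 2) a2 = 1 := by rw [e2]; exact P_odd h2 hv1 _
    rcases nbr h3 h4.symm ha2a3 with ⟨f1,f2⟩|⟨f1,f2⟩
    · rw [f1, P_even h2] at hPa2; exact zero_ne_one hPa2
    have hPa3 : ZMod.castHom h2 (ZMod 2) a3 = 0 := by rw [f1]; exact P_even h2 _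
    rcases nbr h5 h6.symm ha3a4 with ⟨g1,g2⟩|⟨g1,g2⟩
    swap
    · rw [g2, P_odd h2 hv3] at hPa3; exact one_ne_zero hPa3
    have hPa4 : ZMod.castHom h2 (ZMod 2) a4 = 1 := by rw [g2]; exact P_odd h2 hv3 _
    rcases nbr h7 h8.symm ha4a with ⟨k1e,k2e⟩|⟨k1e,k2e⟩
    · rw [k1e, P_even h2] at hPa4; exact zero_ne_one hPa4
    -- good case
    have eq1 := e2.symm.trans f2
    have eq2 := e1.symm.trans k1e
    have eq3 := f1.symm.trans g1
    have eq4 := g2.symm.trans k2e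
    refine key ⟨?_, ?_, ?_, ?_, ?_⟩
    · push_cast at eq1 eq2 eq3 eq4
      linear_combination eq1 + eq4 + eq3 - eq2
    · intro hI
      rw [hI] at eq1
      exact hp12 (Prod.ext hI (odd_share h2 eq1))
    · intro hI
      exact hp23 (Prod.ext hI (j_inj h2 eq3))
    · intro hI
      rw [hI] at eq4
      exact hp34 (Prod.ext hI (odd_share h2 eq4))
    · intro hI
      exact hp41 (Prod.ext hI (j_inj h2 eq2.symm))
  · -- a is "odd"
    rcases nbr h1 hh2.symm haa2 with ⟨e1,e2⟩|⟨e1,e2⟩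
    · rw [e1, P_even h2] at hPa; exact zero_ne_one hPa
    -- e1 : a2 = even of p1, e2 : a = odd of p1
    have hPa2 : ZMod.castHom h2 (ZMod 2) a2 = 0 := by rw [e1]; exact P_even h2 _
    rcases nbr h3 h4.symm ha2a3 with ⟨f1,f2⟩|⟨f1,f2⟩
    swap
    · rw [f2, P_odd h2 hv2] at hPa2; exact one_ne_zero hPa2
    -- f1 : a2 = even of p2, f2 : a3 = odd of p2
    have hPa3 : ZMod.castHom h2 (ZMod 2) a3 = 1 := by rw [f2]; exact P_odd h2 hv2 _
    rcases nbr h5 h6.symm ha3a4 with ⟨g1,g2⟩|⟨g1,g2⟩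
    · rw [g1, P_even h2] at hPa3; exact zero_ne_one hPa3
    -- g1 : a4 = even of p3, g2 : a3 = odd of p3
    have hPa4 : ZMod.castHom h2 (ZMod 2) a4 = 0 := by rw [g1]; exact P_even h2 _
    rcases nbr h7 h8.symm ha4a with ⟨k1e,k2e⟩|⟨k1e,k2e⟩
    swap
    · rw [k2e, P_odd h2 hv4] at hPa4; exact one_ne_zero hPa4
    -- k1e : a4 = even of p4, k2e : a = odd of p4
    have eqA := e2.symm.trans k2e
    have eqB := e1.symm.trans f1
    have eqC := f2.symm.trans g2
    have eqD := g1.symm.trans k1e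
    refine key ⟨?_, ?_, ?_, ?_, ?_⟩
    · push_cast at eqA eqB eqC eqD
      linear_combination eqA - eqC - eqB - eqD
    · intro hI
      exact hp12 (Prod.ext hI (j_inj h2 eqB))
    · intro hI
      rw [hI] at eqC
      exact hp23 (Prod.ext hI (odd_share h2 eqC))
    · intro hI
      exact hp34 (Prod.ext hI (j_inj h2 eqD))
    · intro hI
      rw [hI] at eqA
      exact hp41 (Prod.ext hI (odd_share h2 eqA).symm)

end NoEight
section Lower

lemma cycles_long (h2 : (2:ℕ) ∣ m) (hm14 : 14 ≤ m) (hodd : ∀ i, Odd (v i))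
    (hpos : ∀ i, 0 < v i) (hmono : StrictMono v) (hlt : ∀ i, v i < m)
    (hcond : ∀ k1 k2 k3 k4 : Fin t, k1 ≠ k3 → k1 ≠ k4 → k2 ≠ k3 → k2 ≠ k4 →
      ((v k1 : ℤ) + (v k2 : ℤ)) - ((v k3 : ℤ) + (v k4 : ℤ)) ∉
        ({0, (m : ℤ), -(m : ℤ)} : Set ℤ)) :
    ∀ (x) (w : (tannerGraph m t v).Walk x x), w.IsCycle → 12 ≤ w.length := by
  have main : ∀ (a : ZMod m) (w : (tannerGraph m t v).Walk (inl a) (inl a)),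
      w.IsCycle → 12 ≤ w.length := by
    intro a w hc
    obtain ⟨L, hL, hpar⟩ :=
      trail_parity h2 hodd w.length a a w rfl hc.isCircuit.isTrail
    have hL0 : (L : ZMod 2) = 0 := by
      rw [left_eq_add] at hpar; exact hpar
    obtain ⟨K, hK⟩ := (ZMod.natCast_eq_zero_iff L 2).mp hL0
    have h3 : 3 ≤ w.length := hc.three_le_length
    by_contra hlt12
    push_neg at hlt12
    have : w.length = 4 ∨ w.length = 8 := by omega
    rcases this with h | h
    · exact no_four h2 hodd hmono hlt w hc h
    · exact no_eight h2 hm14 hodd hpos hmono hlt hcond w hc h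
  intro x w hc
  cases x with
  | inl a => exact main a w hc
  | inr p =>
    cases w with
    | nil => have := hc.three_le_length; simp at this
    | cons h1 w1 =>
      rename_i x1
      match x1, h1, w1 with
      | inl b, h1, w1 =>
        have hmem : inl b ∈ (Walk.cons h1 w1).support := by
          simp [Walk.support_cons, Walk.start_mem_support]
        have hlen : ((Walk.cons h1 w1).rotate _ hmem).length = (Walk.cons h1 w1).length := by
          rw [← Walk.length_darts, ← Walk.length_darts]
          exact ((Walk.rotate_darts _ _ hmem).perm).length_eq
        rw [← hlen]
        exact main b _ (hc.rotate hmem)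
      | inr q, h1, w1 => exact absurd h1 not_adj_inr_inr

end Lower

section Twelve

lemma exists_twelve (hm : Even m) (hm14 : 14 ≤ m) (ht : 3 ≤ t) (hodd : ∀ i, Odd (v i))
    (hpos : ∀ i, 0 < v i) (hmono : StrictMono v) (hlt : ∀ i, v i < m) :
    ∃ (x : (ZMod m) ⊕ (Fin t × Fin (m/2))) (w : (tannerGraph m t v).Walk x x),
      w.IsCycle ∧ w.length = 12 := by
  have h2 : (2:ℕ) ∣ m := hm.two_dvd
  obtain ⟨i0, hi0v⟩ : ∃ i : Fin t, (i:ℕ) = 0 := ⟨⟨0, by omega⟩, rfl⟩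
  obtain ⟨i1, hi1v⟩ : ∃ i : Fin t, (i:ℕ) = 1 := ⟨⟨1, by omega⟩, rfl⟩
  obtain ⟨i2, hi2v⟩ : ∃ i : Fin t, (i:ℕ) = 2 := ⟨⟨2, by omega⟩, rfl⟩
  have hAB : v i0 < v i1 := hmono (by rw [Fin.lt_def, hi0v, hi1v]; omega)
  have hBC : v i1 < v i2 := hmono (by rw [Fin.lt_def, hi1v, hi2v]; omega)
  have hA2 : v i0 % 2 = 1 := Nat.odd_iff.mp (hodd _)
  have hB2 : v i1 % 2 = 1 := Nat.odd_iff.mp (hodd _)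
  have hC2 : v i2 % 2 = 1 := Nat.odd_iff.mp (hodd _)
  have hm2 : m % 2 = 0 := Nat.even_iff.mp hm
  have hA0 : 0 < v i0 := hpos _
  have hCm : v i2 < m := hlt _
  have hAm : v i0 < m := hlt _
  have hBm : v i1 < m := hlt _
  obtain ⟨E2, hE2⟩ : ∃ e, e = v i0 + m - v i1 := ⟨_, rfl⟩
  obtain ⟨E3, hE3⟩ : ∃ e, e = v i2 - v i1 := ⟨_, rfl⟩
  obtain ⟨O2, hO2⟩ : ∃ e, e = v i0 + v i2 - v i1 := ⟨_, rfl⟩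
  obtain ⟨j0, hj0v⟩ : ∃ j : Fin (m/2), (j:ℕ) = 0 := ⟨⟨0, by omega⟩, rfl⟩
  obtain ⟨j2, hj2v⟩ : ∃ j : Fin (m/2), (j:ℕ) = E2/2 := ⟨⟨E2/2, by omega⟩, rfl⟩
  obtain ⟨j3, hj3v⟩ : ∃ j : Fin (m/2), (j:ℕ) = E3/2 := ⟨⟨E3/2, by omega⟩, rfl⟩
  have e1 : (tannerGraph m t v).Adj (inl ((0:ℕ) : ZMod m)) (inr (i0, j0)) := by
    rw [adj_inl_inr]
    left
    rw [show 2 * (j0 : ℕ) = 0 by rw [hj0v]]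
  have e2 : (tannerGraph m t v).Adj (inr (i0, j0)) (inl ((v i0 : ℕ) : ZMod m)) := by
    rw [adj_inr_inl]
    right
    rw [show v i0 + 2 * (j0 : ℕ) = v i0 by rw [hj0v]; omega]
  have e3 : (tannerGraph m t v).Adj (inl ((v i0 : ℕ) : ZMod m)) (inr (i1, j2)) := by
    rw [adj_inl_inr]
    right
    rw [show v i1 + 2 * (j2 : ℕ) = v i0 + m by
      rw [hj2v]; omega]
    push_cast [ZMod.natCast_self]
    ring
  have e4 : (tannerGraph m t v).Adj (inr (i1, j2)) (inl ((E2 : ℕ) : ZMod m)) := by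
    rw [adj_inr_inl]
    left
    rw [show 2 * (j2 : ℕ) = E2 by rw [hj2v]; omega]
  have e5 : (tannerGraph m t v).Adj (inl ((E2 : ℕ) : ZMod m)) (inr (i2, j2)) := by
    rw [adj_inl_inr]
    left
    rw [show 2 * (j2 : ℕ) = E2 by rw [hj2v]; omega]
  have e6 : (tannerGraph m t v).Adj (inr (i2, j2)) (inl ((O2 : ℕ) : ZMod m)) := by
    rw [adj_inr_inl]
    right
    rw [show v i2 + 2 * (j2 : ℕ) = O2 + m by
      rw [hj2v]; omega]
    push_cast [ZMod.natCast_self]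
    ring
  have e7 : (tannerGraph m t v).Adj (inl ((O2 : ℕ) : ZMod m)) (inr (i0, j3)) := by
    rw [adj_inl_inr]
    right
    rw [show v i0 + 2 * (j3 : ℕ) = O2 by
      rw [hj3v]; omega]
  have e8 : (tannerGraph m t v).Adj (inr (i0, j3)) (inl ((E3 : ℕ) : ZMod m)) := by
    rw [adj_inr_inl]
    left
    rw [show 2 * (j3 : ℕ) = E3 by rw [hj3v]; omega]
  have e9 : (tannerGraph m t v).Adj (inl ((E3 : ℕ) : ZMod m)) (inr (i1, j3)) := by
    rw [adj_inl_inr]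
    left
    rw [show 2 * (j3 : ℕ) = E3 by rw [hj3v]; omega]
  have e10 : (tannerGraph m t v).Adj (inr (i1, j3)) (inl ((v i2 : ℕ) : ZMod m)) := by
    rw [adj_inr_inl]
    right
    rw [show v i1 + 2 * (j3 : ℕ) = v i2 by
      rw [hj3v]; omega]
  have e11 : (tannerGraph m t v).Adj (inl ((v i2 : ℕ) : ZMod m)) (inr (i2, j0)) := by
    rw [adj_inl_inr]
    right
    rw [show v i2 + 2 * (j0 : ℕ) = v i2 by simp [hj0v]]
  have e12 : (tannerGraph m t v).Adj (inr (i2, j0)) (inl ((0:ℕ) : ZMod m)) := by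
    rw [adj_inr_inl]
    left
    rw [show 2 * (j0 : ℕ) = 0 by rw [hj0v]]
  refine ⟨inl ((0:ℕ) : ZMod m),
    Walk.cons e1 (Walk.cons e2 (Walk.cons e3 (Walk.cons e4 (Walk.cons e5 (Walk.cons e6
      (Walk.cons e7 (Walk.cons e8 (Walk.cons e9 (Walk.cons e10 (Walk.cons e11
      (Walk.cons e12 Walk.nil))))))))))), ?_, by simp⟩
  have cne : ∀ x y : ℕ, x < m → y < m → x ≠ y → ((x : ZMod m) ≠ (y : ZMod m)) :=
    fun x y hx hy hne h => hne (cast_inj_of_lt hx hy h)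
  have g01 : (0 : ZMod m) ≠ ((v i0 : ℕ) : ZMod m) := by
    have := cne 0 (v i0) (by omega) (by omega) (by omega); simpa using this
  have g02 : (0 : ZMod m) ≠ ((E2 : ℕ) : ZMod m) := by
    have := cne 0 (E2) (by omega) (by omega) (by omega); simpa using this
  have g03 : (0 : ZMod m) ≠ ((O2 : ℕ) : ZMod m) := by
    have := cne 0 (O2) (by omega) (by omega) (by omega); simpa using this
  have g04 : (0 : ZMod m) ≠ ((E3 : ℕ) : ZMod m) := by
    have := cne 0 (E3) (by omega) (by omega) (by omega); simpa using this
  have g05 : (0 : ZMod m) ≠ ((v i2 : ℕ) : ZMod m) := by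
    have := cne 0 (v i2) (by omega) (by omega) (by omega); simpa using this
  have g12 : ((v i0 : ℕ) : ZMod m) ≠ ((E2 : ℕ) : ZMod m) := cne _ _ (by omega) (by omega) (by omega)
  have g13 : ((v i0 : ℕ) : ZMod m) ≠ ((O2 : ℕ) : ZMod m) := cne _ _ (by omega) (by omega) (by omega)
  have g14 : ((v i0 : ℕ) : ZMod m) ≠ ((E3 : ℕ) : ZMod m) := cne _ _ (by omega) (by omega) (by omega)
  have g15 : ((v i0 : ℕ) : ZMod m) ≠ ((v i2 : ℕ) : ZMod m) := cne _ _ (by omega) (by omega) (by omega)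
  have g23 : ((E2 : ℕ) : ZMod m) ≠ ((O2 : ℕ) : ZMod m) := cne _ _ (by omega) (by omega) (by omega)
  have g24 : ((E2 : ℕ) : ZMod m) ≠ ((E3 : ℕ) : ZMod m) := cne _ _ (by omega) (by omega) (by omega)
  have g25 : ((E2 : ℕ) : ZMod m) ≠ ((v i2 : ℕ) : ZMod m) := cne _ _ (by omega) (by omega) (by omega)
  have g34 : ((O2 : ℕ) : ZMod m) ≠ ((E3 : ℕ) : ZMod m) := cne _ _ (by omega) (by omega) (by omega)
  have g35 : ((O2 : ℕ) : ZMod m) ≠ ((v i2 : ℕ) : ZMod m) := cne _ _ (by omega) (by omega) (by omega)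
  have g45 : ((E3 : ℕ) : ZMod m) ≠ ((v i2 : ℕ) : ZMod m) := cne _ _ (by omega) (by omega) (by omega)
  have f01 : i0 ≠ i1 := by intro h; rw [h] at hi0v; omega
  have f02 : i0 ≠ i2 := by intro h; rw [h] at hi0v; omega
  have f12 : i1 ≠ i2 := by intro h; rw [h] at hi1v; omega
  have k02 : j0 ≠ j2 := by intro h; rw [h] at hj0v; omega
  have k03 : j0 ≠ j3 := by intro h; rw [h] at hj0v; omega
  have k23 : j2 ≠ j3 := by intro h; rw [h] at hj2v; omega
  rw [Walk.cons_isCycle_iff]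
  constructor
  · apply Walk.IsPath.mk'
    simp only [Walk.support_cons, Walk.support_nil, List.nodup_cons, List.mem_cons,
      List.mem_singleton, List.not_mem_nil, or_false, not_or, List.nodup_nil, and_true,
      Sum.inl.injEq, Sum.inr.injEq, Prod.mk.injEq, ne_eq, not_and, and_imp]
    refine ⟨?_, ?_, ?_, ?_, ?_, ?_, ?_, ?_, ?_, ?_, ?_, ?_⟩ <;>
      simp [g01, g02, g03, g04, g05, g12, g13, g14, g15, g23, g24, g25, g34, g35, g45,
        f01, f02, f12, k02, k03, k23, g01.symm, g02.symm, g03.symm, g04.symm, g05.symm,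
        g12.symm, g13.symm, g14.symm, g15.symm, g23.symm, g24.symm, g25.symm, g34.symm,
        g35.symm, g45.symm, f01.symm, f02.symm, f12.symm, k02.symm, k03.symm, k23.symm]
  · simp only [Walk.edges_cons, Walk.edges_nil, List.mem_cons, List.not_mem_nil, or_false]
    push_neg
    refine ⟨?_, ?_, ?_, ?_, ?_, ?_, ?_, ?_, ?_, ?_, ?_⟩ <;>
      simp [Sym2.eq_iff, g01, g02, g03, g04, g05, g01.symm, g02.symm, g03.symm, g04.symm,
        g05.symm, f01, f02, f12, f01.symm, f02.symm, f12.symm, k02, k03, k02.symm, k03.symm]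

end Twelve

section Eight

lemma exists_eight (hm : Even m) (hm14 : 14 ≤ m) (hodd : ∀ i, Odd (v i))
    (hpos : ∀ i, 0 < v i) (hmono : StrictMono v) (hlt : ∀ i, v i < m)
    {k1 k2 k3 k4 : Fin t} (h13 : k1 ≠ k3) (h14 : k1 ≠ k4) (h23 : k2 ≠ k3) (h24 : k2 ≠ k4)
    (hS : ((v k1 : ℤ) + (v k2 : ℤ)) - ((v k3 : ℤ) + (v k4 : ℤ)) = 0 ∨
          ((v k1 : ℤ) + (v k2 : ℤ)) - ((v k3 : ℤ) + (v k4 : ℤ)) = (m:ℤ) ∨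
          ((v k1 : ℤ) + (v k2 : ℤ)) - ((v k3 : ℤ) + (v k4 : ℤ)) = -(m:ℤ)) :
    ∃ (x : (ZMod m) ⊕ (Fin t × Fin (m/2))) (w : (tannerGraph m t v).Walk x x),
      w.IsCycle ∧ w.length = 8 := by
  have h2 : (2:ℕ) ∣ m := hm.two_dvd
  have hm2 : m % 2 = 0 := Nat.even_iff.mp hm
  have o1 : v k1 % 2 = 1 := Nat.odd_iff.mp (hodd _)
  have o2 : v k2 % 2 = 1 := Nat.odd_iff.mp (hodd _)
  have o3 : v k3 % 2 = 1 := Nat.odd_iff.mp (hodd _)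
  have o4 : v k4 % 2 = 1 := Nat.odd_iff.mp (hodd _)
  have l1 : v k1 < m := hlt _
  have l2 : v k2 < m := hlt _
  have l3 : v k3 < m := hlt _
  have l4 : v k4 < m := hlt _
  have p1 : 0 < v k1 := hpos _
  have p4 : 0 < v k4 := hpos _
  have hne13 : v k1 ≠ v k3 := fun h => h13 (hmono.injective h)
  have hne14 : v k1 ≠ v k4 := fun h => h14 (hmono.injective h)
  obtain ⟨D, hD0, hDm, hD2, hDk⟩ :
      ∃ d, 0 < d ∧ d < m ∧ d % 2 = 0 ∧ (v k3 + d = v k1 ∨ v k3 + d = v k1 + m) := by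
    by_cases h : v k3 < v k1
    · exact ⟨v k1 - v k3, by omega, by omega, by omega, by omega⟩
    · exact ⟨v k1 + m - v k3, by omega, by omega, by omega, by omega⟩
  have hvk24 : v k2 + D = v k4 ∨ v k2 + D = v k4 + m ∨ v k2 + D = v k4 + 2*m := by
    rcases hS with h|h|h <;> rcases hDk with h'|h' <;> omega
  obtain ⟨j0, hj0v⟩ : ∃ j : Fin (m/2), (j:ℕ) = 0 := ⟨⟨0, by omega⟩, rfl⟩
  obtain ⟨jD, hjDv⟩ : ∃ j : Fin (m/2), (j:ℕ) = D/2 := ⟨⟨D/2, by omega⟩, rfl⟩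
  have E1 : (tannerGraph m t v).Adj (inl ((0:ℕ) : ZMod m)) (inr (k1, j0)) := by
    rw [adj_inl_inr]; left; rw [show 2 * (j0 : ℕ) = 0 by rw [hj0v]]
  have E2 : (tannerGraph m t v).Adj (inr (k1, j0)) (inl ((v k1 : ℕ) : ZMod m)) := by
    rw [adj_inr_inl]; right; rw [show v k1 + 2 * (j0 : ℕ) = v k1 by rw [hj0v]; omega]
  have E3 : (tannerGraph m t v).Adj (inl ((v k1 : ℕ) : ZMod m)) (inr (k3, jD)) := by
    rw [adj_inl_inr]; right
    rcases hDk with h'|h'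
    · rw [show v k3 + 2 * (jD : ℕ) = v k1 by rw [hjDv]; omega]
    · rw [show v k3 + 2 * (jD : ℕ) = v k1 + m by rw [hjDv]; omega]
      push_cast [ZMod.natCast_self]
      ring
  have E4 : (tannerGraph m t v).Adj (inr (k3, jD)) (inl ((D : ℕ) : ZMod m)) := by
    rw [adj_inr_inl]; left; rw [show 2 * (jD : ℕ) = D by rw [hjDv]; omega]
  have E5 : (tannerGraph m t v).Adj (inl ((D : ℕ) : ZMod m)) (inr (k2, jD)) := by
    rw [adj_inl_inr]; left; rw [show 2 * (jD : ℕ) = D by rw [hjDv]; omega]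
  have E6 : (tannerGraph m t v).Adj (inr (k2, jD)) (inl ((v k4 : ℕ) : ZMod m)) := by
    rw [adj_inr_inl]; right
    rcases hvk24 with h'|h'|h'
    · rw [show v k2 + 2 * (jD : ℕ) = v k4 by rw [hjDv]; omega]
    · rw [show v k2 + 2 * (jD : ℕ) = v k4 + m by rw [hjDv]; omega]
      push_cast [ZMod.natCast_self]
      ring
    · rw [show v k2 + 2 * (jD : ℕ) = v k4 + 2*m by rw [hjDv]; omega]
      push_cast [ZMod.natCast_self]
      ring
  have E7 : (tannerGraph m t v).Adj (inl ((v k4 : ℕ) : ZMod m)) (inr (k4, j0)) := by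
    rw [adj_inl_inr]; right; rw [show v k4 + 2 * (j0 : ℕ) = v k4 by rw [hj0v]; omega]
  have E8 : (tannerGraph m t v).Adj (inr (k4, j0)) (inl ((0:ℕ) : ZMod m)) := by
    rw [adj_inr_inl]; left; rw [show 2 * (j0 : ℕ) = 0 by rw [hj0v]]
  refine ⟨inl ((0:ℕ) : ZMod m),
    Walk.cons E1 (Walk.cons E2 (Walk.cons E3 (Walk.cons E4 (Walk.cons E5 (Walk.cons E6
      (Walk.cons E7 (Walk.cons E8 Walk.nil))))))), ?_, by simp⟩
  have cne : ∀ x y : ℕ, x < m → y < m → x ≠ y → ((x : ZMod m) ≠ (y : ZMod m)) :=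
    fun x y hx hy hne h => hne (cast_inj_of_lt hx hy h)
  have g01 : (0 : ZMod m) ≠ ((v k1 : ℕ) : ZMod m) := by
    have := cne 0 (v k1) (by omega) (by omega) (by omega); simpa using this
  have g02 : (0 : ZMod m) ≠ ((D : ℕ) : ZMod m) := by
    have := cne 0 D (by omega) (by omega) (by omega); simpa using this
  have g03 : (0 : ZMod m) ≠ ((v k4 : ℕ) : ZMod m) := by
    have := cne 0 (v k4) (by omega) (by omega) (by omega); simpa using this
  have g12 : ((v k1 : ℕ) : ZMod m) ≠ ((D : ℕ) : ZMod m) :=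
    cne _ _ (by omega) (by omega) (by omega)
  have g13 : ((v k1 : ℕ) : ZMod m) ≠ ((v k4 : ℕ) : ZMod m) :=
    cne _ _ (by omega) (by omega) (by omega)
  have g23 : ((D : ℕ) : ZMod m) ≠ ((v k4 : ℕ) : ZMod m) :=
    cne _ _ (by omega) (by omega) (by omega)
  have jne : j0 ≠ jD := by intro h; rw [h] at hj0v; omega
  have h32 : k3 ≠ k2 := h23.symm
  rw [Walk.cons_isCycle_iff]
  constructor
  · apply Walk.IsPath.mk'
    simp only [Walk.support_cons, Walk.support_nil, List.nodup_cons, List.mem_cons,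
      List.mem_singleton, List.not_mem_nil, or_false, not_or, List.nodup_nil, and_true,
      Sum.inl.injEq, Sum.inr.injEq, Prod.mk.injEq, ne_eq, not_and, and_imp]
    refine ⟨?_, ?_, ?_, ?_, ?_, ?_, ?_, ?_⟩ <;>
      simp [g01, g02, g03, g12, g13, g23, g01.symm, g02.symm, g03.symm, g12.symm, g13.symm,
        g23.symm, h13, h14, h23, h24, h32, h13.symm, h14.symm, h23.symm, h24.symm, h32.symm,
        jne, jne.symm]
  · simp only [Walk.edges_cons, Walk.edges_nil, List.mem_cons, List.not_mem_nil, or_false]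
    push_neg
    refine ⟨?_, ?_, ?_, ?_, ?_, ?_, ?_⟩ <;>
      simp [Sym2.eq_iff, g01, g02, g03, g01.symm, g02.symm, g03.symm, h13, h14, h24, h32,
        h13.symm, h14.symm, h24.symm, h32.symm, jne, jne.symm]

end Eight

lemma egirth_le_of_cycle {α : Type*} {G : SimpleGraph α} {a : α} {w : G.Walk a a}
    (hw : w.IsCycle) : G.egirth ≤ w.length := by
  rw [SimpleGraph.egirth]
  exact iInf_le_of_le a (iInf_le_of_le w (iInf_le _ hw))

end TannerAux

open TannerAux Sum in
/-- for an even `m ≥ 14` and an `(m,t)`-vector `v` with `t ≥ 3`, the girth of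
the Tanner graph `TG(H_m(v))` equals `12` if and only if for all indices `k₁, k₂, k₃, k₄`
with `{k₁, k₂} ∩ {k₃, k₄} = ∅` one has `(v k₁ + v k₂) - (v k₃ + v k₄) ∉ {0, m, -m}`. -/
theorem statement9 (m t : ℕ) (hm : Even m) (hm14 : 14 ≤ m) (ht : 3 ≤ t)
    (v : Fin t → ℕ) (hodd : ∀ i, Odd (v i)) (hpos : ∀ i, 0 < v i)
    (hmono : StrictMono v) (hlt : ∀ i, v i < m) :
    (tannerGraph m t v).egirth = 12 ↔
    ∀ k1 k2 k3 k4 : Fin t, k1 ≠ k3 → k1 ≠ k4 → k2 ≠ k3 → k2 ≠ k4 →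
      ((v k1 : ℤ) + (v k2 : ℤ)) - ((v k3 : ℤ) + (v k4 : ℤ)) ∉
        ({0, (m : ℤ), -(m : ℤ)} : Set ℤ) := by
  have h2 : (2:ℕ) ∣ m := hm.two_dvd
  constructor
  · intro h12 k1 k2 k3 k4 h13 h14 h23 h24 hmem
    simp only [Set.mem_insert_iff, Set.mem_singleton_iff] at hmem
    obtain ⟨x, w, hc, hlen⟩ :=
      exists_eight hm hm14 hodd hpos hmono hlt h13 h14 h23 h24 hmem
    have hle := egirth_le_of_cycle hc
    rw [hlen, h12] at hle
    norm_num at hle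
  · intro hcond
    have hcond' : ∀ k1 k2 k3 k4 : Fin t, k1 ≠ k3 → k1 ≠ k4 → k2 ≠ k3 → k2 ≠ k4 →
        ((v k1 : ℤ) + (v k2 : ℤ)) - ((v k3 : ℤ) + (v k4 : ℤ)) ∉
          ({0, (m : ℤ), -(m : ℤ)} : Set ℤ) := hcond
    apply le_antisymm
    · obtain ⟨x, w, hc, hlen⟩ := exists_twelve hm hm14 ht hodd hpos hmono hlt
      have hle := egirth_le_of_cycle hc
      rw [hlen] at hle
      exact le_trans hle (by norm_num)
    · rw [SimpleGraph.le_egirth]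
      intro a w hw
      have h := cycles_long h2 hm14 hodd hpos hmono hlt hcond' a w hw
      exact_mod_cast Nat.cast_le.mpr h
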